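/- arXiv:math/0306386 — 3 statements merged into one kernel-verified Lean document; each statement's English description precedes it below -/
import Mathlib

section
/- The Vandermonde function h_N(x) = ∏_{1 ≤ i < j ≤ N} (x_j - x_i) is harmonic on ℝ^N, i.e., its Laplacian ∑_{i=1}^N ∂²h_N/∂x_i² vanishes identically. -/
noncomputable def vandermonde (N : ℕ) (x : Fin N → ℝ) : ℝ :=
  ∏ p ∈ Finset.univ.filter (fun p : Fin N × Fin N => p.1 < p.2), (x p.2 - x p.1)

open Finset Polynomial

namespace VH
variable {N : ℕ}

noncomputable def dd (x : Fin N → ℝ) (i l : Fin N) : ℝ :=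
  if l < i then x i - x l else x l - x i

noncomputable def sg (i l : Fin N) : ℝ := if l < i then 1 else -1

noncomputable def F (x : Fin N → ℝ) (A : Finset (Fin N)) : ℝ :=
  ∏ p ∈ (A ×ˢ A).filter (fun p => p.1 < p.2), (x p.2 - x p.1)

noncomputable def g (x : Fin N → ℝ) (i l : Fin N) : Polynomial ℝ :=
  if l < i then Polynomial.X - Polynomial.C (x l) else Polynomial.C (x l) - Polynomial.X

noncomputable def Q (x : Fin N → ℝ) (i : Fin N) : Polynomial ℝ :=
  ∏ l ∈ Finset.univ.erase i, g x i l

lemma dd_symm (x : Fin N → ℝ) {i l : Fin N} (h : i ≠ l) : dd x i l = dd x l i := by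
  unfold dd
  rcases lt_trichotomy i l with h' | h' | h'
  · rw [if_neg (asymm h'), if_pos h']
  · exact absurd h' h
  · rw [if_pos h', if_neg (asymm h')]

lemma F_insert (x : Fin N → ℝ) {A : Finset (Fin N)} {a : Fin N} (ha : a ∉ A) :
    F x (insert a A) = F x A * ∏ l ∈ A, dd x a l := by
  classical
  have hsplit : ((insert a A) ×ˢ (insert a A)).filter (fun p => p.1 < p.2)
      = ((A ×ˢ A).filter (fun p => p.1 < p.2))
        ∪ ((A.filter (fun l => a < l)).image (fun l => (a, l))
          ∪ (A.filter (fun l => l < a)).image (fun l => (l, a))) := by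
    ext p
    simp only [mem_filter, mem_product, mem_insert, mem_union, mem_image]
    constructor
    · rintro ⟨⟨h1 | h1, h2 | h2⟩, hlt⟩
      · exact absurd (h1 ▸ h2 ▸ hlt) (lt_irrefl _)
      · exact Or.inr (Or.inl ⟨p.2, ⟨h2, h1 ▸ hlt⟩, by rw [← h1]⟩)
      · exact Or.inr (Or.inr ⟨p.1, ⟨h1, h2 ▸ hlt⟩, by rw [← h2]⟩)
      · exact Or.inl ⟨⟨h1, h2⟩, hlt⟩
    · rintro (⟨⟨h1, h2⟩, hlt⟩ | ⟨l, ⟨hl, hlt⟩, he⟩ | ⟨l, ⟨hl, hlt⟩, he⟩)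
      · exact ⟨⟨Or.inr h1, Or.inr h2⟩, hlt⟩
      · subst he; exact ⟨⟨Or.inl rfl, Or.inr hl⟩, hlt⟩
      · subst he; exact ⟨⟨Or.inr hl, Or.inl rfl⟩, hlt⟩
  have hdisj : Disjoint ((A ×ˢ A).filter (fun p => p.1 < p.2))
      ((A.filter (fun l => a < l)).image (fun l => (a, l))
        ∪ (A.filter (fun l => l < a)).image (fun l => (l, a))) := by
    rw [disjoint_union_right]
    constructor
    · rw [disjoint_left]
      rintro p hp hq
      simp only [mem_filter, mem_product, mem_image] at hp hq
      obtain ⟨l, _, he⟩ := hq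
      exact ha (by rw [← he] at hp; exact hp.1.1)
    · rw [disjoint_left]
      rintro p hp hq
      simp only [mem_filter, mem_product, mem_image] at hp hq
      obtain ⟨l, _, he⟩ := hq
      exact ha (by rw [← he] at hp; exact hp.1.2)
  have hdisj2 : Disjoint ((A.filter (fun l => a < l)).image (fun l => (a, l)))
      ((A.filter (fun l => l < a)).image (fun l => (l, a))) := by
    rw [disjoint_left]
    rintro p hp hq
    simp only [mem_image, mem_filter] at hp hq
    obtain ⟨l, ⟨_, hl⟩, he⟩ := hp
    obtain ⟨m, ⟨_, hm⟩, he'⟩ := hq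
    rw [← he'] at he
    have : a = m := (Prod.mk.inj he).1
    exact absurd (this ▸ hm) (lt_irrefl _)
  rw [F, hsplit, prod_union hdisj, prod_union hdisj2, ← F]
  congr 1
  rw [prod_image (fun l hl m hm he => by simpa using (Prod.mk.inj he).2),
      prod_image (fun l hl m hm he => by simpa using (Prod.mk.inj he).1)]
  have hpart : ∏ l ∈ A, dd x a l
      = (∏ l ∈ A.filter (fun l => a < l), dd x a l)
        * ∏ l ∈ A.filter (fun l => ¬ a < l), dd x a l :=
    (prod_filter_mul_prod_filter_not A _ _).symm
  rw [hpart]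
  congr 1
  · exact prod_congr rfl fun l hl => by
      simp only [mem_filter] at hl
      simp [dd, if_neg (asymm hl.2)]
  · rw [show A.filter (fun l => ¬ a < l) = A.filter (fun l => l < a) from
      filter_congr fun l hl => by
        constructor
        · intro h; rcases lt_trichotomy l a with h' | h' | h'
          · exact h'
          · exact absurd (h' ▸ hl) ha
          · exact absurd h' h
        · exact fun h => asymm h]
    exact prod_congr rfl fun l hl => by
      simp only [mem_filter] at hl
      simp [dd, if_pos hl.2]

lemma g_deriv (x : Fin N → ℝ) (i l : Fin N) :
    derivative (g x i l) = Polynomial.C (sg i l) := by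
  unfold g sg
  split_ifs <;> simp

lemma g_eval (x : Fin N → ℝ) (i l : Fin N) : (g x i l).eval (x i) = dd x i l := by
  unfold g dd; split_ifs <;> simp

lemma derivative_finset_prod (s : Finset (Fin N)) (f : Fin N → Polynomial ℝ) :
    derivative (∏ a ∈ s, f a) = ∑ b ∈ s, (∏ a ∈ s.erase b, f a) * derivative (f b) := by
  classical
  induction s using Finset.induction_on with
  | empty => simp
  | insert _ _ ha ih =>
    rename_i a s
    rw [prod_insert ha, derivative_mul, ih, sum_insert ha, erase_insert ha]
    simp only [Finset.mul_sum]
    congr 1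
    · ring
    refine sum_congr rfl fun b hb => ?_
    rw [erase_insert_of_ne (fun h : a = b => ha (by rw [h]; exact hb)), prod_insert (fun h => ha (mem_of_mem_erase h))]
    ring

/-- second derivative of Q evaluated at x i -/
lemma Q_dd (x : Fin N → ℝ) (i : Fin N) :
    (derivative (derivative (Q x i))).eval (x i)
      = ∑ j ∈ Finset.univ.erase i, ∑ k ∈ (Finset.univ.erase i).erase j,
          sg i j * sg i k * ∏ l ∈ ((Finset.univ.erase i).erase j).erase k, dd x i l := by
  classical
  rw [Q, derivative_finset_prod]
  rw [map_sum]
  rw [eval_finset_sum]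
  refine sum_congr rfl fun j hj => ?_
  rw [g_deriv, derivative_mul, derivative_C, mul_zero, add_zero,
      derivative_finset_prod, Finset.sum_mul, eval_finset_sum]
  refine sum_congr rfl fun k hk => ?_
  rw [g_deriv, eval_mul, eval_mul, eval_C, eval_C, eval_prod]
  rw [prod_congr rfl (fun l _ => g_eval x i l)]
  ring
lemma vandermonde_update (x : Fin N → ℝ) (i : Fin N) (s : ℝ) :
    vandermonde N (Function.update x i s)
      = (Q x i).eval s * F x (Finset.univ.erase i) := by
  classical
  rw [vandermonde,
    ← prod_filter_mul_prod_filter_not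
      (Finset.univ.filter (fun p : Fin N × Fin N => p.1 < p.2))
      (fun p => p.1 = i ∨ p.2 = i)]
  congr 1
  · -- pairs involving i
    rw [Q, eval_prod]
    refine (Finset.prod_nbij' (fun p : Fin N × Fin N => if p.1 = i then p.2 else p.1)
      (fun l => if l < i then (l, i) else (i, l)) ?_ ?_ ?_ ?_ ?_)
    · rintro p hp
      simp only [mem_filter, mem_univ, true_and, mem_erase, and_true] at hp ⊢
      obtain ⟨hlt, h1 | h2⟩ := hp
      · rw [if_pos h1]; exact fun h => absurd (h ▸ h1 ▸ hlt) (lt_irrefl _)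
      · rw [if_neg (fun h => absurd (h ▸ h2 ▸ hlt) (lt_irrefl _))]
        exact fun h => absurd (h ▸ h2 ▸ hlt) (lt_irrefl _)
    · rintro l hl
      simp only [mem_erase, mem_univ, and_true] at hl
      by_cases h : l < i
      · rw [if_pos h]; simp [h]
      · rw [if_neg h]; simp [lt_of_le_of_ne (not_lt.1 h) (Ne.symm hl)]
    · rintro p hp
      simp only [mem_filter, mem_univ, true_and] at hp
      obtain ⟨hlt, h1 | h2⟩ := hp
      · have hip2 : i < p.2 := h1 ▸ hlt
        rw [if_pos h1, if_neg (not_lt.2 hip2.le)]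
        exact Prod.ext h1.symm rfl
      · have hp1i : p.1 < i := h2 ▸ hlt
        rw [if_neg (ne_of_lt hp1i), if_pos hp1i]
        exact Prod.ext rfl h2.symm
    · rintro l hl
      simp only [mem_erase, mem_univ, and_true] at hl
      by_cases h : l < i
      · rw [if_pos h]; simp [hl]
      · rw [if_neg h]; simp
    · rintro p hp
      simp only [mem_filter, mem_univ, true_and] at hp
      obtain ⟨hlt, h1 | h2⟩ := hp
      · have hip2 : i < p.2 := h1 ▸ hlt
        have hne : p.2 ≠ i := (ne_of_lt hip2).symm
        rw [if_pos h1, g, if_neg (not_lt.2 hip2.le)]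
        rw [h1, Function.update_self, Function.update_of_ne hne]
        simp
      · have hp1i : p.1 < i := h2 ▸ hlt
        have hne : p.1 ≠ i := ne_of_lt hp1i
        rw [if_neg hne, g, if_pos hp1i]
        rw [h2, Function.update_self, Function.update_of_ne hne]
        simp
  · -- pairs avoiding i
    rw [F]
    refine Finset.prod_congr ?_ fun p hp => ?_
    · ext p
      simp only [mem_filter, mem_univ, true_and, mem_product, mem_erase, not_or]
      tauto
    · simp only [mem_filter, mem_product, mem_erase, mem_univ, and_true] at hp
      rw [Function.update_of_ne hp.1.2, Function.update_of_ne hp.1.1]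

lemma iteratedDeriv_two_eval (c : ℝ) (p : Polynomial ℝ) (t : ℝ) :
    iteratedDeriv 2 (fun s => p.eval s * c) t
      = (derivative (derivative p)).eval t * c := by
  have h1 : (fun s : ℝ => p.eval s * c) = fun s => (p * Polynomial.C c).eval s := by
    funext s; simp
  have h2 : ∀ q : Polynomial ℝ, (deriv fun s : ℝ => q.eval s) = fun s => (derivative q).eval s :=
    fun q => funext fun y => Polynomial.deriv q
  rw [h1, show (2:ℕ) = 1 + 1 from rfl, iteratedDeriv_succ, iteratedDeriv_one, h2, h2]
  simp


noncomputable def T (x : Fin N → ℝ) (i j k : Fin N) : ℝ :=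
  F x (Finset.univ.erase i) *
    (sg i j * sg i k * ∏ l ∈ ((Finset.univ.erase i).erase j).erase k, dd x i l)

lemma bracket (x : Fin N → ℝ) {i j k : Fin N} (hij : i ≠ j) (hik : i ≠ k) (hjk : j ≠ k) :
    sg i j * sg i k * dd x j k + sg j k * sg j i * dd x k i + sg k i * sg k j * dd x i j = 0 := by
  have h1 : (i : ℕ) ≠ j := Fin.val_ne_of_ne hij
  have h2 : (i : ℕ) ≠ k := Fin.val_ne_of_ne hik
  have h3 : (j : ℕ) ≠ k := Fin.val_ne_of_ne hjk
  simp only [sg, dd, Fin.lt_def]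
  split_ifs <;> first | ring1 | (exfalso; omega)

lemma T_cyclic (x : Fin N → ℝ) {i j k : Fin N} (hij : i ≠ j) (hik : i ≠ k) (hjk : j ≠ k) :
    T x i j k + T x j k i + T x k i j = 0 := by
  classical
  set S : Finset (Fin N) := ((Finset.univ.erase i).erase j).erase k with hS
  have hkS : k ∉ S := notMem_erase _ _
  have hjS : j ∉ S := fun h => notMem_erase j _ (mem_of_mem_erase h)
  have hiS : i ∉ S := fun h =>
    notMem_erase i _ (mem_of_mem_erase (mem_of_mem_erase h))
  have hS2 : ((Finset.univ.erase j).erase k).erase i = S := by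
    rw [hS]; ext l; simp only [mem_erase, mem_univ, and_true]; tauto
  have hS3 : ((Finset.univ.erase k).erase i).erase j = S := by
    rw [hS]; ext l; simp only [mem_erase, mem_univ, and_true]; tauto
  -- expansions of the erase sets
  have hk1 : k ∈ (Finset.univ.erase i).erase j :=
    mem_erase.2 ⟨hjk.symm, mem_erase.2 ⟨hik.symm, mem_univ k⟩⟩
  have hj1 : j ∈ Finset.univ.erase i := mem_erase.2 ⟨hij.symm, mem_univ j⟩
  have hEi : Finset.univ.erase i = insert j (insert k S) := by
    rw [hS, insert_erase hk1, insert_erase hj1]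
  have hi2 : i ∈ (Finset.univ.erase j).erase k :=
    mem_erase.2 ⟨hik, mem_erase.2 ⟨hij, mem_univ i⟩⟩
  have hk2 : k ∈ Finset.univ.erase j := mem_erase.2 ⟨hjk.symm, mem_univ k⟩
  have hEj : Finset.univ.erase j = insert k (insert i S) := by
    rw [← hS2, insert_erase hi2, insert_erase hk2]
  have hj3 : j ∈ (Finset.univ.erase k).erase i :=
    mem_erase.2 ⟨hij.symm, mem_erase.2 ⟨hjk, mem_univ j⟩⟩
  have hi3 : i ∈ Finset.univ.erase k := mem_erase.2 ⟨hik, mem_univ i⟩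
  have hEk : Finset.univ.erase k = insert i (insert j S) := by
    rw [← hS3, insert_erase hj3, insert_erase hi3]
  have hjkS : j ∉ insert k S := by
    simp only [mem_insert]; rintro (h | h); exacts [hjk h, hjS h]
  have hkiS : k ∉ insert i S := by
    simp only [mem_insert]; rintro (h | h); exacts [hik h.symm, hkS h]
  have hijS : i ∉ insert j S := by
    simp only [mem_insert]; rintro (h | h); exacts [hij h, hiS h]
  have hFi : F x (Finset.univ.erase i)
      = (F x S * ∏ l ∈ S, dd x k l) * (dd x j k * ∏ l ∈ S, dd x j l) := by
    rw [hEi, F_insert x hjkS, F_insert x hkS, prod_insert hkS]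
  have hFj : F x (Finset.univ.erase j)
      = (F x S * ∏ l ∈ S, dd x i l) * (dd x k i * ∏ l ∈ S, dd x k l) := by
    rw [hEj, F_insert x hkiS, F_insert x hiS, prod_insert hiS]
  have hFk : F x (Finset.univ.erase k)
      = (F x S * ∏ l ∈ S, dd x j l) * (dd x i j * ∏ l ∈ S, dd x i l) := by
    rw [hEk, F_insert x hijS, F_insert x hjS, prod_insert hjS]
  have hb := bracket x hij hik hjk
  rw [T, T, T, ← hS, hS2, hS3, hFi, hFj, hFk]
  linear_combination
    (F x S * ((∏ l ∈ S, dd x i l) * (∏ l ∈ S, dd x j l) * (∏ l ∈ S, dd x k l))) * hb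

theorem main (x : Fin N → ℝ) :
    ∑ i : Fin N, ∑ j ∈ Finset.univ.erase i, ∑ k ∈ (Finset.univ.erase i).erase j, T x i j k
      = 0 := by
  classical
  set P : Finset (Fin N × Fin N × Fin N) :=
    Finset.univ.filter (fun t => t.1 ≠ t.2.1 ∧ t.1 ≠ t.2.2 ∧ t.2.1 ≠ t.2.2) with hP
  have hnest : ∑ i : Fin N, ∑ j ∈ Finset.univ.erase i, ∑ k ∈ (Finset.univ.erase i).erase j,
      T x i j k = ∑ t ∈ P, T x t.1 t.2.1 t.2.2 := by
    rw [hP, Finset.sum_filter, Fintype.sum_prod_type]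
    refine Finset.sum_congr rfl fun i _ => ?_
    rw [Fintype.sum_prod_type]
    have inner : ∀ j : Fin N,
        (∑ k : Fin N, if i ≠ j ∧ i ≠ k ∧ j ≠ k then T x i j k else 0)
          = if j ∈ Finset.univ.erase i then
              ∑ k ∈ (Finset.univ.erase i).erase j, T x i j k else 0 := by
      intro j
      by_cases hj : j ∈ Finset.univ.erase i
      · rw [if_pos hj]
        have hij : i ≠ j := (mem_erase.1 hj).1.symm
        rw [show (Finset.univ.erase i).erase j
            = Finset.univ.filter (fun k => i ≠ j ∧ i ≠ k ∧ j ≠ k) from by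
          ext k; simp only [mem_erase, mem_filter, mem_univ, true_and, and_true]
          constructor
          · rintro ⟨h1, h2⟩; exact ⟨hij, Ne.symm h2, Ne.symm h1⟩
          · rintro ⟨_, h2, h3⟩; exact ⟨Ne.symm h3, Ne.symm h2⟩]
        rw [Finset.sum_filter]
      · rw [if_neg hj]
        have : i = j := Eq.symm (by simpa using hj)
        refine Finset.sum_eq_zero fun k _ => ?_
        rw [if_neg (fun h => h.1 this)]
    rw [Finset.sum_congr rfl fun j _ => inner j, Finset.sum_ite_mem, Finset.univ_inter]
  rw [hnest]
  have rot1 : ∑ t ∈ P, T x t.1 t.2.1 t.2.2 = ∑ t ∈ P, T x t.2.1 t.2.2 t.1 := by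
    refine Finset.sum_nbij' (fun t => (t.2.2, t.1, t.2.1)) (fun t => (t.2.1, t.2.2, t.1))
      ?_ ?_ ?_ ?_ ?_
    · rintro t ht
      simp only [hP, mem_filter, mem_univ, true_and] at ht ⊢
      exact ⟨ht.2.1.symm, ht.2.2.symm, ht.1⟩
    · rintro t ht
      simp only [hP, mem_filter, mem_univ, true_and] at ht ⊢
      exact ⟨ht.2.2, ht.1.symm, ht.2.1.symm⟩
    · intro t _; rfl
    · intro t _; rfl
    · intro t _; rfl
  have rot2 : ∑ t ∈ P, T x t.1 t.2.1 t.2.2 = ∑ t ∈ P, T x t.2.2 t.1 t.2.1 := by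
    refine Finset.sum_nbij' (fun t => (t.2.1, t.2.2, t.1)) (fun t => (t.2.2, t.1, t.2.1))
      ?_ ?_ ?_ ?_ ?_
    · rintro t ht
      simp only [hP, mem_filter, mem_univ, true_and] at ht ⊢
      exact ⟨ht.2.2, ht.1.symm, ht.2.1.symm⟩
    · rintro t ht
      simp only [hP, mem_filter, mem_univ, true_and] at ht ⊢
      exact ⟨ht.2.1.symm, ht.2.2.symm, ht.1⟩
    · intro t _; rfl
    · intro t _; rfl
    · intro t _; rfl
  have hzero : ∑ t ∈ P, (T x t.1 t.2.1 t.2.2 + T x t.2.1 t.2.2 t.1 + T x t.2.2 t.1 t.2.1)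
      = 0 := by
    refine Finset.sum_eq_zero fun t ht => ?_
    simp only [hP, mem_filter, mem_univ, true_and] at ht
    exact T_cyclic x ht.1 ht.2.1 ht.2.2
  rw [Finset.sum_add_distrib, Finset.sum_add_distrib, ← rot1, ← rot2] at hzero
  linarith

end VH

/-- The Vandermonde product `h_N` is harmonic on `ℝ^N`: the sum of its second
partial derivatives vanishes at every point. -/
theorem vandermonde_harmonic (N : ℕ) (x : Fin N → ℝ) :
    ∑ i : Fin N,
      iteratedDeriv 2 (fun s : ℝ => vandermonde N (Function.update x i s)) (x i) = 0 := by
  classical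
  have hstep : ∀ i : Fin N,
      iteratedDeriv 2 (fun s : ℝ => vandermonde N (Function.update x i s)) (x i)
        = ∑ j ∈ Finset.univ.erase i, ∑ k ∈ (Finset.univ.erase i).erase j, VH.T x i j k := by
    intro i
    have hfe : (fun s : ℝ => vandermonde N (Function.update x i s))
        = fun s => (VH.Q x i).eval s * VH.F x (Finset.univ.erase i) :=
      funext fun s => VH.vandermonde_update x i s
    rw [hfe, VH.iteratedDeriv_two_eval, VH.Q_dd, Finset.sum_mul]
    refine Finset.sum_congr rfl fun j hj => ?_
    rw [Finset.sum_mul]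
    refine Finset.sum_congr rfl fun k hk => ?_
    rw [VH.T]; ring
  rw [Finset.sum_congr rfl fun i _ => hstep i]
  exact VH.main x
end

section
/- The Karlin–McGregor determinant satisfies the Chapman–Kolmogorov (semigroup) identity: for all s, t > 0 and x, z ∈ ℝ^N with x_1 < ⋯ < x_N and z_1 < ⋯ < z_N, ∫_{y_1 < y_2 < ⋯ < y_N} f_N(s, y | x) f_N(t, z | y) dy = f_N(s + t, z | x). -/
open MeasureTheory

open Real

noncomputable def heatKer (t x y : ℝ) : ℝ :=
  (2 * Real.pi * t) ^ (-(1:ℝ)/2) * Real.exp (-(y - x)^2 / (2 * t))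

noncomputable def fKM (N : ℕ) (t : ℝ) (y x : Fin N → ℝ) : ℝ :=
  Matrix.det (Matrix.of fun i j : Fin N => heatKer t (x j) (y i))

def Weyl (N : ℕ) : Set (Fin N → ℝ) := {x | ∀ i j : Fin N, i < j → x i < x j}

lemma heatKer_mul_eq {s t : ℝ} (hs : 0 < s) (ht : 0 < t) (a c y : ℝ) :
    heatKer s a y * heatKer t y c =
    ((2*Real.pi*s) ^ (-(1:ℝ)/2) * (2*Real.pi*t) ^ (-(1:ℝ)/2) *
      Real.exp (-(c-a)^2 / (2*(s+t)))) *
      Real.exp (-((s+t)/(2*s*t)) * (y - (t*a+s*c)/(s+t))^2) := by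
  unfold heatKer
  have h1 : ∀ A B u v : ℝ, (A * Real.exp u) * (B * Real.exp v)
      = A * B * Real.exp (u + v) := by
    intro A B u v; rw [Real.exp_add]; ring
  have h2 : ∀ A B w r : ℝ, (A * B * Real.exp w) * Real.exp r
      = A * B * Real.exp (w + r) := by
    intro A B w r; rw [Real.exp_add]; ring
  rw [h1, h2]
  congr 1
  have hst : s + t ≠ 0 := by positivity
  congr 1
  field_simp
  ring


lemma integrable_heatKer_mul {s t : ℝ} (hs : 0 < s) (ht : 0 < t) (a c : ℝ) :
    Integrable (fun y => heatKer s a y * heatKer t y c) := by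
  have hb : 0 < (s+t)/(2*s*t) := by positivity
  have : Integrable (fun y : ℝ =>
      ((2*Real.pi*s) ^ (-(1:ℝ)/2) * (2*Real.pi*t) ^ (-(1:ℝ)/2) *
      Real.exp (-(c-a)^2 / (2*(s+t)))) *
      Real.exp (-((s+t)/(2*s*t)) * (y - (t*a+s*c)/(s+t))^2)) := by
    exact ((integrable_exp_neg_mul_sq hb).comp_sub_right _).const_mul _
  exact this.congr (Filter.Eventually.of_forall fun y =>
    (heatKer_mul_eq hs ht a c y).symm)

lemma heatKer_conv {s t : ℝ} (hs : 0 < s) (ht : 0 < t) (a c : ℝ) :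
    ∫ y : ℝ, heatKer s a y * heatKer t y c = heatKer (s+t) a c := by
  have hb : 0 < (s+t)/(2*s*t) := by positivity
  have h1 : ∫ y : ℝ, heatKer s a y * heatKer t y c =
      ((2*Real.pi*s) ^ (-(1:ℝ)/2) * (2*Real.pi*t) ^ (-(1:ℝ)/2) *
      Real.exp (-(c-a)^2 / (2*(s+t)))) *
      ∫ y : ℝ, Real.exp (-((s+t)/(2*s*t)) * (y - (t*a+s*c)/(s+t))^2) := by
    rw [← integral_const_mul]
    exact integral_congr_ae (Filter.Eventually.of_forall fun y =>
      heatKer_mul_eq hs ht a c y)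
  have h2 : ∫ y : ℝ, Real.exp (-((s+t)/(2*s*t)) * (y - (t*a+s*c)/(s+t))^2)
      = Real.sqrt (Real.pi / ((s+t)/(2*s*t))) := by
    rw [integral_sub_right_eq_self (fun y => Real.exp (-((s+t)/(2*s*t)) * y^2))]
    exact integral_gaussian _
  rw [h1, h2]
  unfold heatKer
  have hconst : (2*Real.pi*s) ^ (-(1:ℝ)/2) * (2*Real.pi*t) ^ (-(1:ℝ)/2) *
      Real.sqrt (Real.pi / ((s+t)/(2*s*t))) = (2*Real.pi*(s+t)) ^ (-(1:ℝ)/2) := by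
    have hpi := Real.pi_pos
    have e1 : ∀ u : ℝ, 0 < u → u ^ (-(1:ℝ)/2) = (Real.sqrt u)⁻¹ := by
      intro u hu
      rw [show (-(1:ℝ)/2) = -(1/2) by ring, Real.rpow_neg hu.le,
        Real.sqrt_eq_rpow]
    rw [e1 _ (by positivity), e1 _ (by positivity), e1 _ (by positivity),
      ← Real.sqrt_inv, ← Real.sqrt_inv, ← Real.sqrt_inv,
      ← Real.sqrt_mul (by positivity), ← Real.sqrt_mul (by positivity)]
    congr 1
    field_simp
  rw [← hconst]
  ring


noncomputable def sgn {N : ℕ} (σ : Equiv.Perm (Fin N)) : ℝ :=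
  ((Equiv.Perm.sign σ : ℤ) : ℝ)

lemma sgn_mul_self {N : ℕ} (σ : Equiv.Perm (Fin N)) : sgn σ * sgn σ = 1 := by
  unfold sgn
  have h : Equiv.Perm.sign σ * Equiv.Perm.sign σ = 1 := Int.units_mul_self _
  have h2 : ((Equiv.Perm.sign σ * Equiv.Perm.sign σ : ℤˣ) : ℤ) = 1 := by rw [h]; rfl
  push_cast at h2 ⊢
  exact_mod_cast h2

lemma fKM_eq_sum (N : ℕ) (t : ℝ) (y x : Fin N → ℝ) :
    fKM N t y x = ∑ σ : Equiv.Perm (Fin N), sgn σ * ∏ i, heatKer t (x i) (y (σ i)) := by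
  unfold fKM sgn
  rw [Matrix.det_apply']
  rfl

lemma fKM_comp_perm_fst (N : ℕ) (t : ℝ) (y x : Fin N → ℝ) (σ : Equiv.Perm (Fin N)) :
    fKM N t (y ∘ σ) x = sgn σ * fKM N t y x := by
  unfold fKM sgn
  have h : (Matrix.of fun i j : Fin N => heatKer t (x j) ((y ∘ σ) i)) =
      (Matrix.of fun i j : Fin N => heatKer t (x j) (y i)).submatrix σ id := rfl
  rw [h, Matrix.det_permute]

lemma fKM_comp_perm_snd (N : ℕ) (t : ℝ) (y x : Fin N → ℝ) (σ : Equiv.Perm (Fin N)) :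
    fKM N t y (x ∘ σ) = sgn σ * fKM N t y x := by
  unfold fKM sgn
  have h : (Matrix.of fun i j : Fin N => heatKer t ((x ∘ σ) j) (y i)) =
      (Matrix.of fun i j : Fin N => heatKer t (x j) (y i)).submatrix id σ := rfl
  rw [h, Matrix.det_permute']

lemma det_sum_identity (N : ℕ) (K : Fin N → Fin N → ℝ) :
    ∑ p : Equiv.Perm (Fin N) × Equiv.Perm (Fin N),
      sgn p.1 * sgn p.2 * ∏ i, K (p.1⁻¹ i) (p.2 i)
    = (N.factorial : ℝ) * ∑ ρ : Equiv.Perm (Fin N), sgn ρ * ∏ i, K i (ρ i) := by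
  rw [Fintype.sum_prod_type]
  have inner : ∀ σ : Equiv.Perm (Fin N),
      (∑ τ : Equiv.Perm (Fin N), sgn σ * sgn τ * ∏ i, K (σ⁻¹ i) (τ i))
      = ∑ ρ : Equiv.Perm (Fin N), sgn ρ * ∏ i, K i (ρ i) := by
    intro σ
    have step1 : ∀ τ : Equiv.Perm (Fin N),
        (∏ i, K (σ⁻¹ i) (τ i)) = ∏ i, K i ((τ * σ) i) := by
      intro τ
      rw [← Equiv.prod_comp σ (fun i => K (σ⁻¹ i) (τ i))]
      simp [Equiv.Perm.mul_apply]
    simp_rw [step1]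
    rw [← Equiv.sum_comp (Equiv.mulRight σ⁻¹)
      (fun τ => sgn σ * sgn τ * ∏ i, K i ((τ * σ) i))]
    refine Finset.sum_congr rfl fun ρ _ => ?_
    have hperm : Equiv.mulRight σ⁻¹ ρ * σ = ρ := by
      simp [mul_assoc]
    have hsgn : sgn σ * sgn (Equiv.mulRight σ⁻¹ ρ) = sgn ρ := by
      unfold sgn
      have : Equiv.Perm.sign σ * Equiv.Perm.sign (ρ * σ⁻¹) = Equiv.Perm.sign ρ := by
        rw [Equiv.Perm.sign_mul, Equiv.Perm.sign_inv]
        rw [mul_comm (Equiv.Perm.sign ρ) _, ← mul_assoc, Int.units_mul_self, one_mul]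
      simp only [Equiv.coe_mulRight]
      exact_mod_cast congrArg (Int.cast : ℤ → ℝ) (congrArg (Units.val) this)
    rw [hperm, hsgn]
  simp_rw [inner]
  rw [Finset.sum_const]
  simp [Fintype.card_perm, mul_comm]

lemma weyl_measurable (N : ℕ) : MeasurableSet (Weyl N) := by
  have : Weyl N = ⋂ (p : Fin N × Fin N), ⋂ (_ : p.1 < p.2),
      {y : Fin N → ℝ | y p.1 < y p.2} := by
    ext y
    simp only [Weyl, Set.mem_setOf_eq, Set.mem_iInter]
    exact ⟨fun h p hp => h p.1 p.2 hp, fun h i j hij => h (i, j) hij⟩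
  rw [this]
  exact MeasurableSet.iInter fun p => MeasurableSet.iInter fun _ =>
    measurableSet_lt (measurable_pi_apply _) (measurable_pi_apply _)

lemma mem_weyl_iff_strictMono (N : ℕ) (f : Fin N → ℝ) :
    f ∈ Weyl N ↔ StrictMono f := by
  constructor
  · intro h i j hij; exact h i j hij
  · intro h i j hij; exact h hij

lemma perm_eq_one_of_strictMono {N : ℕ} (pe : Equiv.Perm (Fin N))
    (h : StrictMono ⇑pe) : pe = 1 := by
  have hr : Set.range ⇑pe = Set.range (id : Fin N → Fin N) := by
    rw [pe.surjective.range_eq, Set.range_id]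
  have inst : WellFoundedLT (Fin N) := inferInstance
  have this : ⇑pe = (id : Fin N → Fin N) :=
    (@StrictMono.range_inj (Fin N) (Fin N) _ _ inst _ _ h strictMono_id).mp hr
  ext i
  exact congrArg Fin.val (congrFun this i)

lemma weyl_preimage_disjoint (N : ℕ) (σ τ : Equiv.Perm (Fin N)) (hne : σ ≠ τ) :
    Disjoint ((fun y : Fin N → ℝ => y ∘ σ) ⁻¹' Weyl N)
      ((fun y : Fin N → ℝ => y ∘ τ) ⁻¹' Weyl N) := by
  rw [Set.disjoint_left]
  intro y hyσ hyτ
  have hfσ : StrictMono (y ∘ σ) := (mem_weyl_iff_strictMono N _).1 hyσ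
  have hfτ : StrictMono (y ∘ τ) := (mem_weyl_iff_strictMono N _).1 hyτ
  set pe : Equiv.Perm (Fin N) := τ⁻¹ * σ with hpe
  have hpesm : StrictMono ⇑pe := by
    intro i j hij
    have h1 : (y ∘ τ) (pe i) = (y ∘ σ) i := by
      simp [hpe, Function.comp]
    have h2 : (y ∘ τ) (pe j) = (y ∘ σ) j := by
      simp [hpe, Function.comp]
    have := hfσ hij
    rw [← h1, ← h2] at this
    exact hfτ.lt_iff_lt.mp this
  have : pe = 1 := perm_eq_one_of_strictMono pe hpesm
  apply hne
  have := congrArg (fun ρ => τ * ρ) this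
  simpa [hpe, mul_assoc] using this

lemma hyperplane_null {N : ℕ} {i j : Fin N} (hij : i ≠ j) :
    volume {y : Fin N → ℝ | y i = y j} = 0 := by
  have hset : {y : Fin N → ℝ | y i = y j} =
      (LinearMap.ker ((LinearMap.proj i : (Fin N → ℝ) →ₗ[ℝ] ℝ) - LinearMap.proj j) :
        Submodule ℝ (Fin N → ℝ)) := by
    ext y
    simp [LinearMap.mem_ker, sub_eq_zero]
  rw [hset]
  apply MeasureTheory.Measure.addHaar_submodule
  intro htop
  have hmem : (Pi.single i (1:ℝ)) ∈ LinearMap.ker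
      ((LinearMap.proj i : (Fin N → ℝ) →ₗ[ℝ] ℝ) - LinearMap.proj j) := by
    rw [htop]; trivial
  rw [LinearMap.mem_ker] at hmem
  simp only [LinearMap.sub_apply, LinearMap.proj_apply, Pi.single_eq_same,
    Pi.single_eq_of_ne (Ne.symm hij)] at hmem
  norm_num at hmem

lemma compl_union_null (N : ℕ) :
    volume ((⋃ σ : Equiv.Perm (Fin N),
      (fun y : Fin N → ℝ => y ∘ σ) ⁻¹' Weyl N)ᶜ) = 0 := by
  refine measure_mono_null (t := ⋃ (p : Fin N × Fin N) (_ : p.1 ≠ p.2),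
    {y : Fin N → ℝ | y p.1 = y p.2}) ?_ ?_
  · intro y hy
    simp only [Set.mem_compl_iff, Set.mem_iUnion, not_exists] at hy
    by_contra hcon
    simp only [Set.mem_iUnion, Set.mem_setOf_eq, not_exists] at hcon
    have hinj : Function.Injective y := by
      intro a b hab
      by_contra hne
      exact hcon (a, b) hne hab
    set σ := Tuple.sort y with hσ
    have hmono : Monotone (y ∘ σ) := Tuple.monotone_sort y
    have hsm : StrictMono (y ∘ σ) :=
      hmono.strictMono_of_injective (hinj.comp σ.injective)
    exact hy σ ((mem_weyl_iff_strictMono N _).2 hsm)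
  · refine measure_iUnion_null fun p => measure_iUnion_null fun hp => hyperplane_null hp

lemma piCongrLeft_perm_apply (N : ℕ) (σ : Equiv.Perm (Fin N)) (y : Fin N → ℝ) :
    MeasurableEquiv.piCongrLeft (fun _ : Fin N => ℝ) (σ⁻¹ : Equiv.Perm (Fin N)) y
      = y ∘ σ := by
  funext j
  have h := Equiv.piCongrLeft_apply_apply (fun _ : Fin N => ℝ)
    (σ⁻¹ : Equiv.Perm (Fin N)) y (σ j)
  simpa [MeasurableEquiv.coe_piCongrLeft] using h

lemma setIntegral_weyl_preimage (N : ℕ) (σ : Equiv.Perm (Fin N))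
    (F : (Fin N → ℝ) → ℝ) (hsymm : ∀ y, F (y ∘ σ) = F y) :
    ∫ y in (fun y : Fin N → ℝ => y ∘ σ) ⁻¹' Weyl N, F y = ∫ y in Weyl N, F y := by
  have hmp := volume_measurePreserving_piCongrLeft (fun _ : Fin N => ℝ)
    (σ⁻¹ : Equiv.Perm (Fin N))
  have hemb := (MeasurableEquiv.piCongrLeft (fun _ : Fin N => ℝ)
    (σ⁻¹ : Equiv.Perm (Fin N))).measurableEmbedding
  have key := hmp.setIntegral_preimage_emb hemb F (Weyl N)
  have hcoe : ⇑(MeasurableEquiv.piCongrLeft (fun _ : Fin N => ℝ)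
      (σ⁻¹ : Equiv.Perm (Fin N))) = fun y : Fin N → ℝ => y ∘ σ :=
    funext (piCongrLeft_perm_apply N σ)
  rw [hcoe] at key
  simp only [hsymm] at key
  exact key


lemma F_expand (N : ℕ) (s t : ℝ) (x z : Fin N → ℝ) (y : Fin N → ℝ) :
    fKM N s y x * fKM N t z y =
    ∑ p : Equiv.Perm (Fin N) × Equiv.Perm (Fin N),
      sgn p.1 * sgn p.2 *
        ∏ i, (heatKer s (x (p.1⁻¹ i)) (y i) * heatKer t (y i) (z (p.2 i))) := by
  rw [fKM_eq_sum, fKM_eq_sum, Finset.sum_mul_sum, Fintype.sum_prod_type]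
  refine Finset.sum_congr rfl fun σ _ => Finset.sum_congr rfl fun τ _ => ?_
  have hprod : ∏ i, heatKer s (x i) (y (σ i))
      = ∏ i, heatKer s (x (σ⁻¹ i)) (y i) := by
    rw [← Equiv.prod_comp σ (fun i => heatKer s (x (σ⁻¹ i)) (y i))]
    simp
  rw [hprod, Finset.prod_mul_distrib]
  ring


lemma F_integrable (N : ℕ) {s t : ℝ} (hs : 0 < s) (ht : 0 < t) (x z : Fin N → ℝ) :
    Integrable (fun y : Fin N → ℝ => fKM N s y x * fKM N t z y) := by
  have h : Integrable (fun y : Fin N → ℝ =>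
      ∑ p : Equiv.Perm (Fin N) × Equiv.Perm (Fin N),
        sgn p.1 * sgn p.2 *
          ∏ i, (heatKer s (x (p.1⁻¹ i)) (y i) * heatKer t (y i) (z (p.2 i)))) := by
    refine integrable_finset_sum _ fun p _ => ?_
    exact (Integrable.fintype_prod
      (f := fun i w => heatKer s (x (p.1⁻¹ i)) w * heatKer t w (z (p.2 i)))
      (fun i => integrable_heatKer_mul hs ht _ _)).const_mul _
  exact h.congr (Filter.Eventually.of_forall fun y => (F_expand N s t x z y).symm)

lemma integral_F (N : ℕ) {s t : ℝ} (hs : 0 < s) (ht : 0 < t) (x z : Fin N → ℝ) :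
    ∫ y : Fin N → ℝ, fKM N s y x * fKM N t z y
      = (N.factorial : ℝ) * fKM N (s + t) z x := by
  rw [integral_congr_ae (Filter.Eventually.of_forall (F_expand N s t x z))]
  rw [integral_finset_sum (μ := volume) Finset.univ
    (f := fun (p : Equiv.Perm (Fin N) × Equiv.Perm (Fin N)) (y : Fin N → ℝ) =>
      sgn p.1 * sgn p.2 *
        ∏ i, (heatKer s (x (p.1⁻¹ i)) (y i) * heatKer t (y i) (z (p.2 i))))
    (fun p _ => (Integrable.fintype_prod
      (f := fun i w => heatKer s (x (p.1⁻¹ i)) w * heatKer t w (z (p.2 i)))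
      (fun i => integrable_heatKer_mul hs ht _ _)).const_mul _)]
  simp_rw [integral_const_mul]
  have hconv : ∀ p : Equiv.Perm (Fin N) × Equiv.Perm (Fin N),
      (∫ y : Fin N → ℝ, ∏ i, (heatKer s (x (p.1⁻¹ i)) (y i) * heatKer t (y i) (z (p.2 i))))
      = ∏ i, heatKer (s+t) (x (p.1⁻¹ i)) (z (p.2 i)) := by
    intro p
    rw [volume_pi, integral_fintype_prod_eq_prod
      (f := fun i w => heatKer s (x (p.1⁻¹ i)) w * heatKer t w (z (p.2 i)))]
    exact Finset.prod_congr rfl fun i _ => heatKer_conv hs ht _ _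
  simp_rw [hconv]
  rw [det_sum_identity N (fun a b => heatKer (s+t) (x a) (z b)), fKM_eq_sum]

/-- The Chapman–Kolmogorov (semigroup) identity for the Karlin–McGregor determinant. -/
theorem fKM_chapman_kolmogorov (N : ℕ) (s t : ℝ) (hs : 0 < s) (ht : 0 < t)
    (x z : Fin N → ℝ) (hx : x ∈ Weyl N) (hz : z ∈ Weyl N) :
    ∫ y in Weyl N, fKM N s y x * fKM N t z y = fKM N (s + t) z x := by
  classical
  set F : (Fin N → ℝ) → ℝ := fun y => fKM N s y x * fKM N t z y with hF
  set W : Equiv.Perm (Fin N) → Set (Fin N → ℝ) :=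
    fun σ => (fun y : Fin N → ℝ => y ∘ σ) ⁻¹' Weyl N with hW
  have hsymmF : ∀ (σ : Equiv.Perm (Fin N)) (y : Fin N → ℝ), F (y ∘ σ) = F y := by
    intro σ y
    show fKM N s (y ∘ σ) x * fKM N t z (y ∘ σ) = fKM N s y x * fKM N t z y
    rw [fKM_comp_perm_fst, fKM_comp_perm_snd]
    rw [show sgn σ * fKM N s y x * (sgn σ * fKM N t z y)
      = (sgn σ * sgn σ) * (fKM N s y x * fKM N t z y) from by ring,
      sgn_mul_self, one_mul]
  have hWmeas : ∀ σ, MeasurableSet (W σ) := by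
    intro σ
    have hm : Measurable (fun y : Fin N → ℝ => y ∘ σ) :=
      measurable_pi_lambda _ fun i => measurable_pi_apply (σ i)
    exact hm (weyl_measurable N)
  have hint : Integrable F := F_integrable N hs ht x z
  have h1 : ∫ y, F y = ∫ y in ⋃ σ : Equiv.Perm (Fin N), W σ, F y := by
    rw [← setIntegral_univ]
    exact setIntegral_congr_set (MeasureTheory.ae_eq_univ.2 (compl_union_null N)).symm
  have h2 : ∫ y in ⋃ σ : Equiv.Perm (Fin N), W σ, F y
      = ∑ σ : Equiv.Perm (Fin N), ∫ y in W σ, F y := by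
    rw [show (⋃ σ : Equiv.Perm (Fin N), W σ) = ⋃ σ ∈ Finset.univ, W σ from by simp]
    exact integral_biUnion_finset Finset.univ (fun σ _ => hWmeas σ)
      (fun σ _ τ _ hne => weyl_preimage_disjoint N σ τ hne)
      (fun σ _ => hint.integrableOn)
  have h3 : ∀ σ : Equiv.Perm (Fin N), ∫ y in W σ, F y = ∫ y in Weyl N, F y :=
    fun σ => setIntegral_weyl_preimage N σ F (hsymmF σ)
  have h4 : ∫ y, F y = (N.factorial : ℝ) * ∫ y in Weyl N, F y := by
    rw [h1, h2]
    simp_rw [h3]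
    rw [Finset.sum_const, Finset.card_univ, Fintype.card_perm, Fintype.card_fin,
      nsmul_eq_mul]
  have h5 : ∫ y, F y = (N.factorial : ℝ) * fKM N (s + t) z x := integral_F N hs ht x z
  have hNe : (N.factorial : ℝ) ≠ 0 := by
    exact_mod_cast Nat.factorial_ne_zero N
  apply mul_left_cancel₀ hNe
  rw [← h4, h5]
end

section
/- The Karlin–McGregor determinant is strictly positive inside the Weyl chamber: for all t > 0 and x, y ∈ ℝ^N with x_1 < ⋯ < x_N and y_1 < ⋯ < y_N, one has f_N(t, y | x) = det_{1≤i,j≤N}[G_t(x_j, y_i)] > 0. -/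
open Real Finset

lemma expPoly_coeffs_zero : ∀ (n : ℕ) (a c w : Fin n → ℝ), StrictMono a → StrictMono w →
    (∀ j, ∑ i, c i * Real.exp (a i * w j) = 0) → c = 0 := by
  intro n
  induction n with
  | zero => intro a c w _ _ _; funext i; exact absurd i.2 (by simp)
  | succ n ih =>
    intro a c w ha hw hz
    set h : ℝ → ℝ := fun v => ∑ i, c i * Real.exp ((a i - a 0) * v) with hh
    have hzero : ∀ j, h (w j) = 0 := by
      intro j
      have : h (w j) = (∑ i, c i * Real.exp (a i * w j)) * Real.exp (-(a 0) * w j) := by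
        rw [Finset.sum_mul]
        refine Finset.sum_congr rfl fun i _ => ?_
        rw [mul_assoc, ← Real.exp_add]; ring_nf
      rw [this, hz j, zero_mul]
    have hderiv : ∀ v : ℝ, HasDerivAt h
        (∑ i, c i * ((a i - a 0) * Real.exp ((a i - a 0) * v))) v := by
      intro v
      refine HasDerivAt.fun_sum (F := ℝ) fun i _ => ?_
      have h1 : HasDerivAt (fun v : ℝ => (a i - a 0) * v) (a i - a 0) v := by
        simpa using (hasDerivAt_id v).const_mul (a i - a 0)
      have h3 := (h1.exp).const_mul (c i)
      convert h3 using 1; rfl; ring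
    have hroll : ∀ j : Fin n, ∃ v ∈ Set.Ioo (w j.castSucc) (w j.succ),
        (∑ i, c i * ((a i - a 0) * Real.exp ((a i - a 0) * v))) = 0 := by
      intro j
      refine exists_hasDerivAt_eq_zero (f := h) (hw (Fin.castSucc_lt_succ : j.castSucc < j.succ))
        (Continuous.continuousOn (by fun_prop)) (by rw [hzero, hzero]) fun v _ => hderiv v
    choose v hv1 hv2 using hroll
    have hvmono : StrictMono v := by
      intro j k hjk
      calc v j < w j.succ := (hv1 j).2
        _ ≤ w k.castSucc := hw.monotone (by
            rw [Fin.succ_le_castSucc_iff]; exact hjk)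
        _ < v k := (hv1 k).1
    have hc' : (fun i : Fin n => c i.succ * (a i.succ - a 0)) = 0 := by
      refine ih (fun i => a i.succ - a 0) _ v (fun i k hik => by
        have := ha (Fin.succ_lt_succ_iff.mpr hik)
        show a i.succ - a 0 < a k.succ - a 0
        linarith) hvmono ?_
      intro j
      have := hv2 j
      rw [Fin.sum_univ_succ] at this
      simp only [sub_self, zero_mul, mul_zero, zero_add] at this
      rw [← this]
      refine Finset.sum_congr rfl fun i _ => ?_; ring
    have hcsucc : ∀ i : Fin n, c i.succ = 0 := by
      intro i
      have h1 : c i.succ * (a i.succ - a 0) = 0 := congrFun hc' i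
      have h2 : a 0 < a i.succ := ha (Fin.succ_pos i)
      rcases mul_eq_zero.mp h1 with h | h
      · exact h
      · linarith
    have hc0 : c 0 = 0 := by
      have := hz 0
      rw [Fin.sum_univ_succ] at this
      simp only [hcsucc, zero_mul, Finset.sum_const_zero, add_zero] at this
      have := mul_eq_zero.mp this
      rcases this with h | h
      · exact h
      · exact absurd h (Real.exp_ne_zero _)
    funext i
    refine Fin.cases ?_ ?_ i
    · exact hc0
    · exact hcsucc

lemma expDet_ne_zero {n : ℕ} (a w : Fin n → ℝ) (ha : StrictMono a) (hw : StrictMono w) :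
    (Matrix.of fun i j : Fin n => Real.exp (a i * w j)).det ≠ 0 := by
  intro hdet
  obtain ⟨c, hc, hmul⟩ := Matrix.exists_vecMul_eq_zero_iff.mpr hdet
  apply hc
  refine expPoly_coeffs_zero n a c w ha hw fun j => ?_
  have := congrFun hmul j
  simpa [Matrix.vecMul, dotProduct] using this

lemma expDet_pos {n : ℕ} (a w : Fin n → ℝ) (ha : StrictMono a) (hw : StrictMono w) :
    0 < (Matrix.of fun i j : Fin n => Real.exp (a i * w j)).det := by
  have hmono0 : StrictMono (fun i : Fin n => (i : ℝ)) := fun i j hij => by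
    show (i : ℝ) < (j : ℝ); exact_mod_cast hij
  have hmonoA : ∀ s ∈ Set.Icc (0:ℝ) 1,
      StrictMono (fun i : Fin n => (1 - s) * (i : ℝ) + s * a i) := by
    intro s hs i j hij
    have h1 : (i : ℝ) < (j : ℝ) := hmono0 hij
    have h2 : a i < a j := ha hij
    show (1 - s) * (i : ℝ) + s * a i < (1 - s) * (j : ℝ) + s * a j
    rcases eq_or_lt_of_le hs.1 with h | h
    · rw [← h]; simpa using h1
    · nlinarith [hs.2]
  have hmonoW : ∀ s ∈ Set.Icc (0:ℝ) 1,
      StrictMono (fun j : Fin n => (1 - s) * (j : ℝ) + s * w j) := by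
    intro s hs i j hij
    have h1 : (i : ℝ) < (j : ℝ) := hmono0 hij
    have h2 : w i < w j := hw hij
    show (1 - s) * (i : ℝ) + s * w i < (1 - s) * (j : ℝ) + s * w j
    rcases eq_or_lt_of_le hs.1 with h | h
    · rw [← h]; simpa using h1
    · nlinarith [hs.2]
  set φ : ℝ → ℝ := fun s => (Matrix.of fun i j : Fin n =>
    Real.exp (((1 - s) * (i : ℝ) + s * a i) * ((1 - s) * (j : ℝ) + s * w j))).det with hφ
  have hcont : Continuous φ := by
    apply Continuous.matrix_det
    apply continuous_matrix
    intro i j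
    simp only [Matrix.of_apply]
    fun_prop
  have hne : ∀ s ∈ Set.Icc (0:ℝ) 1, φ s ≠ 0 := fun s hs =>
    expDet_ne_zero _ _ (hmonoA s hs) (hmonoW s hs)
  have hφ0 : 0 < φ 0 := by
    have hmeq : (Matrix.of fun i j : Fin n =>
        Real.exp (((1 - (0:ℝ)) * (i : ℝ) + 0 * a i) * ((1 - (0:ℝ)) * (j : ℝ) + 0 * w j)))
        = Matrix.transpose (Matrix.vandermonde fun j : Fin n => Real.exp (j : ℝ)) := by
      ext i j
      simp only [Matrix.transpose_apply, Matrix.of_apply, Matrix.vandermonde_apply]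
      rw [← Real.exp_nat_mul]
      ring_nf
    have : φ 0 = (Matrix.vandermonde fun j : Fin n => Real.exp (j : ℝ)).det := by
      rw [hφ]
      simp only []
      rw [hmeq, Matrix.det_transpose]
    rw [this, Matrix.det_vandermonde]
    refine Finset.prod_pos fun i _ => Finset.prod_pos fun j hj => ?_
    have h1 : (i : ℝ) < (j : ℝ) := by exact_mod_cast Finset.mem_Ioi.mp hj
    have := Real.exp_lt_exp.mpr h1
    linarith
  have hφ1 : φ 1 = (Matrix.of fun i j : Fin n => Real.exp (a i * w j)).det := by
    rw [hφ]; norm_num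
  rw [← hφ1]
  by_contra hle
  push_neg at hle
  have h1lt : φ 1 < 0 := lt_of_le_of_ne hle (hne 1 (by norm_num))
  have h0m : (0:ℝ) ∈ Set.Icc (φ 1) (φ 0) := ⟨le_of_lt h1lt, le_of_lt hφ0⟩
  obtain ⟨s, hs, hφs⟩ := intermediate_value_Icc' (by norm_num : (0:ℝ) ≤ 1)
    hcont.continuousOn h0m
  exact hne s hs hφs


/-- Strict positivity of the Karlin–McGregor determinant inside the Weyl chamber. -/
theorem fKM_pos (N : ℕ) (t : ℝ) (ht : 0 < t) (x y : Fin N → ℝ)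
    (hx : ∀ i j : Fin N, i < j → x i < x j)
    (hy : ∀ i j : Fin N, i < j → y i < y j) :
    0 < fKM N t y x := by
  have hxm : StrictMono x := fun i j h => hx i j h
  have hym : StrictMono (fun i => y i / t) := fun i j h => by
    show y i / t < y j / t
    exact div_lt_div_of_pos_right (hy i j h) ht
  set r : Fin N → ℝ := fun i => (2 * Real.pi * t) ^ (-(1:ℝ)/2) *
    Real.exp (-(y i)^2 / (2 * t)) with hr
  set c : Fin N → ℝ := fun j => Real.exp (-(x j)^2 / (2 * t)) with hc
  have hrpos : ∀ i, 0 < r i := fun i => by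
    apply mul_pos
    · apply Real.rpow_pos_of_pos
      positivity
    · exact Real.exp_pos _
  have hcpos : ∀ j, 0 < c j := fun j => Real.exp_pos _
  have hfac : (Matrix.of fun i j : Fin N => heatKer t (x j) (y i)) =
      Matrix.of (fun i j => r i * (Matrix.of (fun i j => c j *
        (Matrix.of fun i j : Fin N => Real.exp ((y i / t) * x j)) i j)) i j) := by
    ext i j
    simp only [Matrix.of_apply, heatKer, hr, hc]
    have harg : -(y i - x j)^2 / (2 * t) =
        (-(y i)^2 / (2 * t)) + ((-(x j)^2 / (2 * t)) + (y i / t * x j)) := by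
      field_simp
      ring
    rw [harg, Real.exp_add, Real.exp_add]
    ring
  unfold fKM
  rw [hfac, Matrix.det_mul_column, Matrix.det_mul_row]
  have hdet := expDet_pos (fun i => y i / t) x hym hxm
  have hrprod : 0 < ∏ i, r i := Finset.prod_pos fun i _ => hrpos i
  have hcprod : 0 < ∏ j, c j := Finset.prod_pos fun j _ => hcpos j
  positivity
end
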